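/- Let K be a real-valued field and let φ : M → N be a K°-linear homomorphism of K°-modules, with M and N equipped with their adic seminorms. Then: (i) φ is non-expansive, i.e., ‖φ(x)‖_adic ≤ ‖x‖_adic for all x ∈ M; (ii) if M and N are torsion-free, then φ is an isometry (‖φ(x)‖_adic = ‖x‖_adic for all x) if and only if every element of ker(φ) is divisible and coker(φ) contains no essential torsion element (i.e., every torsion element of coker(φ) is almost zero). -/

import Mathlib

open scoped NNReal

/-- The adic seminorm on a `K°`-module `M`: `‖x‖ = inf {|a| : a ∈ K°, x ∈ aM}`. -/
noncomputable def adicSeminorm {K : Type*} [Field K] (vK : Valuation K ℝ≥0)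
    (M : Type*) [AddCommGroup M] [Module ↥vK.integer M] (x : M) : ℝ≥0 :=
  sInf { r | ∃ a : ↥vK.integer, (∃ y : M, x = a • y) ∧ r = vK ↑a }

section aux
variable {K : Type*} [Field K] (vK : Valuation K ℝ≥0)
variable {M : Type*} [AddCommGroup M] [Module ↥vK.integer M]

lemma adicSet_nonempty (x : M) :
    { r | ∃ a : ↥vK.integer, (∃ y : M, x = a • y) ∧ r = vK ↑a }.Nonempty :=
  ⟨vK ((1 : ↥vK.integer) : K), 1, ⟨x, (one_smul _ x).symm⟩, rfl⟩

lemma adicSeminorm_le_of_smul {a : ↥vK.integer} {x : M} (h : ∃ y : M, x = a • y) :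
    adicSeminorm vK M x ≤ vK ↑a :=
  csInf_le (OrderBot.bddBelow _) ⟨a, h, rfl⟩

lemma adicSeminorm_le_one (x : M) : adicSeminorm vK M x ≤ 1 := by
  simpa using adicSeminorm_le_of_smul vK (a := 1) (x := x) ⟨x, (one_smul _ x).symm⟩

lemma adicSeminorm_zero : adicSeminorm vK M 0 = 0 :=
  le_antisymm (by simpa using adicSeminorm_le_of_smul vK (a := 0) (x := (0:M)) ⟨0, by simp⟩)
    zero_le

lemma le_adicSeminorm_smul [NoZeroSMulDivisors ↥vK.integer M]
    {b : ↥vK.integer} (hb : b ≠ 0) (x : M) :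
    vK ↑b * adicSeminorm vK M x ≤ adicSeminorm vK M (b • x) := by
  refine le_csInf (adicSet_nonempty vK _) ?_
  rintro r ⟨c, ⟨y, hy⟩, rfl⟩
  have hbK : (↑b : K) ≠ 0 := fun h => hb (Subtype.ext h)
  have hvb : 0 < vK ↑b := (Valuation.pos_iff vK).mpr hbK
  rcases le_or_gt (vK ↑c) (vK ↑b) with h | h
  · have hd : ((↑c : K) / ↑b) ∈ vK.integer := by
      rw [Valuation.mem_integer_iff, map_div₀]
      exact div_le_one_of_le₀ h zero_le
    set d : ↥vK.integer := ⟨(↑c : K) / ↑b, hd⟩ with hddef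
    have hbd : b * d = c := Subtype.ext (by
      show (↑b : K) * (↑c / ↑b) = ↑c
      field_simp)
    have hx : x = d • y := by
      apply smul_right_injective M hb
      show b • x = b • (d • y)
      rw [smul_smul, hbd, ← hy]
    have h1 : adicSeminorm vK M x ≤ vK ↑d := adicSeminorm_le_of_smul vK ⟨y, hx⟩
    calc vK ↑b * adicSeminorm vK M x ≤ vK ↑b * vK ↑d := mul_le_mul_right h1 _
      _ = vK ↑(b * d) := by push_cast; rw [map_mul]
      _ = vK ↑c := by rw [hbd]
  · calc vK ↑b * adicSeminorm vK M x ≤ vK ↑b * 1 := mul_le_mul_right (adicSeminorm_le_one vK x) _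
      _ = vK ↑b := mul_one _
      _ ≤ vK ↑c := h.le

end aux

set_option maxHeartbeats 1000000 in
/-- For `K°`-modules with their adic seminorms: (i) every `K°`-linear map is non-expansive;
(ii) if `M` and `N` are torsion-free then `φ : M → N` is an isometry iff every element of
`ker φ` is divisible and every torsion element of `coker φ` is almost zero (here `π ∈ K°°` is
nonzero if the valuation is nontrivial and `π = 0` if it is trivial). -/
theorem adicSeminorm_nonexpansive_and_isometry_criterion
    {K : Type*} [Field K] (vK : Valuation K ℝ≥0)
    {M N : Type*} [AddCommGroup M] [AddCommGroup N]
    [Module ↥vK.integer M] [Module ↥vK.integer N]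
    (π : ↥vK.integer) (hπlt : vK ↑π < 1)
    (hπtriv : π = 0 ↔ ∀ y : K, y ≠ 0 → vK y = 1)
    (φ : M →ₗ[↥vK.integer] N) :
    -- (i) non-expansive
    (∀ x : M, adicSeminorm vK N (φ x) ≤ adicSeminorm vK M x) ∧
    -- (ii) isometry criterion in the torsion-free case
    (NoZeroSMulDivisors ↥vK.integer M → NoZeroSMulDivisors ↥vK.integer N →
      ((∀ x : M, adicSeminorm vK N (φ x) = adicSeminorm vK M x) ↔
        ((∀ x ∈ LinearMap.ker φ, ∀ n : ℕ, ∃ y : M, x = (π ^ n) • y) ∧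
          (∀ z : N ⧸ LinearMap.range φ,
            (∃ a : ↥vK.integer, a ≠ 0 ∧ a • z = 0) →
            ∀ r : ℝ≥0, r < 1 → ∃ a : ↥vK.integer, r < vK ↑a ∧ a • z = 0)))) := by
  have nonexp : ∀ x : M, adicSeminorm vK N (φ x) ≤ adicSeminorm vK M x := by
    intro x
    refine le_csInf (adicSet_nonempty vK x) ?_
    rintro r ⟨a, ⟨y, hy⟩, rfl⟩
    exact adicSeminorm_le_of_smul vK ⟨φ y, by rw [hy, map_smul]⟩
  refine ⟨nonexp, fun hM hN => ⟨fun hiso => ⟨?_, ?_⟩, fun ⟨hker, hcok⟩ x => ?_⟩⟩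
  · -- kernel divisible
    intro x hx n
    have hφx : φ x = 0 := hx
    have h0 : adicSeminorm vK M x = 0 := by
      rw [← hiso x, hφx, adicSeminorm_zero]
    by_cases hπ : π = 0
    · have htriv := hπtriv.mp hπ
      have hx0 : x = 0 := by
        by_contra hne
        have h1 : (1 : ℝ≥0) ≤ adicSeminorm vK M x := by
          refine le_csInf (adicSet_nonempty vK x) ?_
          rintro r ⟨a, ⟨y, hy⟩, rfl⟩
          have haK : (↑a : K) ≠ 0 := by
            intro h
            apply hne
            rw [hy, show a = 0 from Subtype.ext h, zero_smul]
          rw [htriv _ haK]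
        rw [h0] at h1
        exact absurd h1 (by norm_num)
      rcases n with _ | n
      · exact ⟨x, by simp [hx0]⟩
      · exact ⟨0, by simp [hx0, hπ, zero_pow (Nat.succ_ne_zero n)]⟩
    · have hπK : (↑π : K) ≠ 0 := fun h => hπ (Subtype.ext h)
      have hpow : (0 : ℝ≥0) < vK ↑(π ^ n) := by
        refine (Valuation.pos_iff vK).mpr ?_
        push_cast
        exact pow_ne_zero n hπK
      obtain ⟨r, ⟨c, ⟨y, hy⟩, rfl⟩, hlt⟩ :=
        exists_lt_of_csInf_lt (adicSet_nonempty vK x) (h0 ▸ hpow)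
      have hd : ((↑c : K) / ↑(π ^ n)) ∈ vK.integer := by
        rw [Valuation.mem_integer_iff, map_div₀]
        exact div_le_one_of_le₀ hlt.le zero_le
      set d : ↥vK.integer := ⟨(↑c : K) / ↑(π ^ n), hd⟩
      have hbd : π ^ n * d = c := Subtype.ext (by
        show (↑(π ^ n) : K) * (↑c / ↑(π ^ n)) = ↑c
        have : (↑(π ^ n) : K) ≠ 0 := by push_cast; exact pow_ne_zero n hπK
        field_simp)
      exact ⟨d • y, by rw [hy, ← hbd, mul_smul]⟩
  · -- cokernel: torsion elements are almost zero
    intro z hz r hr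
    obtain ⟨a, ha, haz⟩ := hz
    obtain ⟨u, rfl⟩ := Submodule.Quotient.mk_surjective _ z
    have haK : (↑a : K) ≠ 0 := fun h => ha (Subtype.ext h)
    have hva : 0 < vK ↑a := (Valuation.pos_iff vK).mpr haK
    have hmem : a • u ∈ LinearMap.range φ := by
      rwa [← Submodule.Quotient.mk_eq_zero, Submodule.Quotient.mk_smul]
    obtain ⟨x, hx⟩ := hmem
    have hkey : ∃ c : ↥vK.integer, (∃ w : M, x = c • w) ∧ r * vK ↑c < vK ↑a := by
      by_cases hr0 : r = 0
      · exact ⟨1, ⟨x, (one_smul _ _).symm⟩, by simpa [hr0] using hva⟩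
      · have h1 : adicSeminorm vK M x < vK ↑a / r := by
          have h2 : adicSeminorm vK M x ≤ vK ↑a := by
            rw [← hiso x, hx]
            exact adicSeminorm_le_of_smul vK ⟨u, rfl⟩
          refine h2.trans_lt ?_
          rw [lt_div_iff₀ (pos_iff_ne_zero.mpr hr0)]
          exact mul_lt_of_lt_one_right hva hr
        obtain ⟨s, ⟨c, ⟨w, hw⟩, rfl⟩, hlt⟩ :=
          exists_lt_of_csInf_lt (adicSet_nonempty vK x) h1
        exact ⟨c, ⟨w, hw⟩, by rw [mul_comm]; exact (lt_div_iff₀ (pos_iff_ne_zero.mpr hr0)).mp hlt⟩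
    obtain ⟨c, ⟨w, hw⟩, hcr⟩ := hkey
    rcases le_or_gt (vK ↑c) (vK ↑a) with hca | hca
    · -- u itself lies in the range
      have hd : ((↑c : K) / ↑a) ∈ vK.integer := by
        rw [Valuation.mem_integer_iff, map_div₀]
        exact div_le_one_of_le₀ hca zero_le
      set d : ↥vK.integer := ⟨(↑c : K) / ↑a, hd⟩
      have had : a * d = c := Subtype.ext (by
        show (↑a : K) * (↑c / ↑a) = ↑c
        field_simp)
      have hu : u = φ (d • w) := by
        apply smul_right_injective N ha
        show a • u = a • φ (d • w)
        rw [← hx, hw, map_smul, map_smul, smul_smul, had]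
      refine ⟨1, by simpa using hr, ?_⟩
      rw [one_smul, Submodule.Quotient.mk_eq_zero]
      exact ⟨d • w, hu.symm⟩
    · have hvc : 0 < vK ↑c := hva.trans hca
      have hcK : (↑c : K) ≠ 0 := (Valuation.pos_iff vK).mp hvc
      have hc0 : c ≠ 0 := fun h => hcK (by rw [h]; rfl)
      have hb : ((↑a : K) / ↑c) ∈ vK.integer := by
        rw [Valuation.mem_integer_iff, map_div₀]
        exact div_le_one_of_le₀ hca.le zero_le
      set b : ↥vK.integer := ⟨(↑a : K) / ↑c, hb⟩
      have hcb : c * b = a := Subtype.ext (by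
        show (↑c : K) * (↑a / ↑c) = ↑a
        field_simp)
      have hbu : b • u = φ w := by
        apply smul_right_injective N hc0
        show c • b • u = c • φ w
        rw [smul_smul, hcb, ← hx, hw, map_smul]
      refine ⟨b, ?_, ?_⟩
      · show r < vK ((↑a : K) / ↑c)
        rw [map_div₀, lt_div_iff₀ hvc]
        exact hcr
      · rw [← Submodule.Quotient.mk_smul, Submodule.Quotient.mk_eq_zero, hbu]
        exact ⟨w, rfl⟩
  · -- backward: conditions imply isometry
    refine le_antisymm (nonexp x) ?_
    refine le_csInf (adicSet_nonempty vK (φ x)) ?_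
    rintro r' ⟨c, ⟨v, hv⟩, rfl⟩
    by_cases hc : c = 0
    · -- φ x = 0
      have hxker : x ∈ LinearMap.ker φ := by
        rw [LinearMap.mem_ker, hv, hc, zero_smul]
      have h0 : adicSeminorm vK M x = 0 := by
        by_cases hπ : π = 0
        · obtain ⟨y, hy⟩ := hker x hxker 1
          rw [hy, pow_one, hπ, zero_smul, adicSeminorm_zero]
        · have hπK : (↑π : K) ≠ 0 := fun h => hπ (Subtype.ext h)
          have hvπ : 0 < vK ↑π := (Valuation.pos_iff vK).mpr hπK
          by_contra hne
          obtain ⟨n, hn⟩ := exists_pow_lt_of_lt_one (pos_iff_ne_zero.mpr hne) hπlt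
          obtain ⟨y, hy⟩ := hker x hxker n
          have : adicSeminorm vK M x ≤ (vK ↑π) ^ n := by
            have := adicSeminorm_le_of_smul vK (a := π ^ n) ⟨y, hy⟩
            rwa [show ((↑(π ^ n) : K)) = (↑π : K) ^ n by push_cast; ring, map_pow] at this
          exact absurd (this.trans_lt hn) (lt_irrefl _)
      rw [h0]
      exact zero_le
    · have hcK : (↑c : K) ≠ 0 := fun h => hc (Subtype.ext h)
      have hvc : 0 < vK ↑c := (Valuation.pos_iff vK).mpr hcK
      by_contra hgt
      push_neg at hgt
      have hxpos : 0 < adicSeminorm vK M x := hvc.trans hgt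
      have hdiv1 : vK ↑c / adicSeminorm vK M x < 1 := by
        rw [div_lt_one hxpos]
        exact hgt
      obtain ⟨r, hr1, hr2⟩ := exists_between hdiv1
      have hr0 : vK ↑c < r * adicSeminorm vK M x := by
        exact (div_lt_iff₀ hxpos).mp hr1
      have hztor : ∃ a : ↥vK.integer, a ≠ 0 ∧ a • (Submodule.Quotient.mk v : N ⧸ LinearMap.range φ) = 0 := by
        refine ⟨c, hc, ?_⟩
        rw [← Submodule.Quotient.mk_smul, ← hv, Submodule.Quotient.mk_eq_zero]
        exact ⟨x, rfl⟩
      obtain ⟨b, hbr, hbz⟩ := hcok _ hztor r hr2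
      have hbv : b • v ∈ LinearMap.range φ := by
        have h3 : (Submodule.Quotient.mk (b • v) : N ⧸ LinearMap.range φ) = 0 := by
          rw [Submodule.Quotient.mk_smul]
          exact hbz
        rwa [Submodule.Quotient.mk_eq_zero] at h3
      obtain ⟨w, hwv⟩ := hbv
      have hb0 : b ≠ 0 := by
        intro h
        rw [h] at hbr
        simp at hbr
      obtain ⟨n, hn⟩ : ∃ n : ℕ, vK ↑(π ^ n) ≤ vK ↑c := by
        by_cases hπ : π = 0
        · exact ⟨1, by simp [hπ, show ((0 : ↥vK.integer) : K) = 0 from rfl]⟩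
        · have hπK : (↑π : K) ≠ 0 := fun h => hπ (Subtype.ext h)
          obtain ⟨n, hn⟩ := exists_pow_lt_of_lt_one hvc hπlt
          refine ⟨n, ?_⟩
          rw [show ((↑(π ^ n) : K)) = (↑π : K) ^ n by push_cast; ring, map_pow]
          exact hn.le
      have hkker : b • x - c • w ∈ LinearMap.ker φ := by
        rw [LinearMap.mem_ker, map_sub, map_smul, map_smul, hv, hwv,
          smul_smul, smul_smul, mul_comm, sub_self]
      obtain ⟨y, hy⟩ := hker _ hkker n
      have he : ((↑(π ^ n) : K) / ↑c) ∈ vK.integer := by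
        rw [Valuation.mem_integer_iff, map_div₀]
        exact div_le_one_of_le₀ hn zero_le
      set e : ↥vK.integer := ⟨(↑(π ^ n) : K) / ↑c, he⟩
      have hce : c * e = π ^ n := Subtype.ext (by
        show (↑c : K) * (↑(π ^ n) / ↑c) = ↑(π ^ n)
        field_simp)
      have hbx : b • x = c • (w + e • y) := by
        have h2 : b • x = c • w + (π ^ n) • y := by
          rw [← hy]; abel
        rw [h2, smul_add, smul_smul, hce]
      have h1 : vK ↑b * adicSeminorm vK M x ≤ vK ↑c :=
        (le_adicSeminorm_smul vK hb0 x).trans (adicSeminorm_le_of_smul vK ⟨_, hbx⟩)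
      have h2 : r * adicSeminorm vK M x < vK ↑b * adicSeminorm vK M x :=
        mul_lt_mul_of_pos_right hbr hxpos
      exact absurd (hr0.trans (h2.trans_le h1)) (lt_irrefl _)
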